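/- Let V be a finite-dimensional real vector space, and let X ⊆ V be a subset whose complement V \ X is convex. Then the function φ_X on closed convex polyhedral cones in V, defined by φ_X(K) = 1 if K is nonempty and K ⊆ X, and φ_X(K) = 0 otherwise, is a valuation: for all closed convex polyhedral cones K, K' with K ∪ K' also a closed convex polyhedral cone, φ_X(K ∪ K') + φ_X(K ∩ K') = φ_X(K) + φ_X(K'). -/

import Mathlib

/-- A closed convex polyhedral cone: the set of nonnegative combinations of
finitely many vectors (possibly none, giving `{0}`). -/
def IsPolyCone {V : Type*} [AddCommGroup V] [Module ℝ V] (K : Set V) : Prop :=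
  ∃ (n : ℕ) (v : Fin n → V),
    K = {x | ∃ c : Fin n → ℝ, (∀ i, 0 ≤ c i) ∧ x = ∑ i, c i • v i}

open Finset Set

section Basics

variable {V : Type*} [AddCommGroup V] [Module ℝ V]

lemma polyCone_zero_mem {K : Set V} (h : IsPolyCone K) : (0 : V) ∈ K := by
  obtain ⟨n, v, rfl⟩ := h
  exact ⟨0, fun i => le_refl 0, by simp⟩

lemma polyCone_convex {K : Set V} (h : IsPolyCone K) : Convex ℝ K := by
  obtain ⟨n, v, rfl⟩ := h
  rintro x ⟨c, hc, rfl⟩ y ⟨d, hd, rfl⟩ p q hp hq hpq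
  refine ⟨fun i => p * c i + q * d i,
    fun i => add_nonneg (mul_nonneg hp (hc i)) (mul_nonneg hq (hd i)), ?_⟩
  simp [add_smul, mul_smul, Finset.smul_sum, Finset.sum_add_distrib]

lemma polyCone_image {W : Type*} [AddCommGroup W] [Module ℝ W]
    (f : V →ₗ[ℝ] W) {K : Set V} (h : IsPolyCone K) : IsPolyCone (f '' K) := by
  obtain ⟨n, v, rfl⟩ := h
  refine ⟨n, f ∘ v, ?_⟩
  ext y
  constructor
  · rintro ⟨x, ⟨c, hc, rfl⟩, rfl⟩
    exact ⟨c, hc, by simp [map_sum, map_smul]⟩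
  · rintro ⟨c, hc, rfl⟩
    exact ⟨∑ i, c i • v i, ⟨c, hc, rfl⟩, by simp [map_sum, map_smul]⟩

end Basics

section Closed

variable {W : Type*} [NormedAddCommGroup W] [NormedSpace ℝ W]

/-- Cone generated by `v i`, `i ∈ s`. -/
def coneS {n : ℕ} (v : Fin n → W) (s : Finset (Fin n)) : Set W :=
  {x | ∃ c : Fin n → ℝ, (∀ i, 0 ≤ c i) ∧ (∀ i, i ∉ s → c i = 0) ∧ x = ∑ i, c i • v i}

lemma coneS_closed [FiniteDimensional ℝ W] {n : ℕ} (v : Fin n → W)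
    (s : Finset (Fin n)) : IsClosed (coneS v s) := by
  induction s using Finset.strongInduction with
  | _ s IH =>
  classical
  by_cases hli : LinearIndependent ℝ (fun i : ↥s => v i)
  · -- linearly independent generators: closed embedding of the positive orthant
    let φ : ((↥s : Type) → ℝ) →ₗ[ℝ] W :=
      { toFun := fun c => ∑ i, c i • v (i : Fin n)
        map_add' := by intro a b; simp [add_smul, Finset.sum_add_distrib]
        map_smul' := by intro m a; simp [smul_smul, Finset.smul_sum]
      }
    have hker : LinearMap.ker φ = ⊥ := by
      rw [LinearMap.ker_eq_bot']
      intro c hc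
      funext i
      exact Fintype.linearIndependent_iff.mp hli c hc i
    have hemb := LinearMap.isClosedEmbedding_of_injective (f := φ) hker
    have hC : IsClosed {c : ↥s → ℝ | ∀ i, 0 ≤ c i} := by
      have : {c : ↥s → ℝ | ∀ i, 0 ≤ c i} =
          ⋂ i, (fun c : ↥s → ℝ => c i) ⁻¹' (Ici 0) := by
        ext c; simp [Set.mem_iInter]
      rw [this]
      exact isClosed_iInter fun i => isClosed_Ici.preimage (continuous_apply i)
    have himg : coneS v s = φ '' {c | ∀ i, 0 ≤ c i} := by
      ext x
      constructor
      · rintro ⟨c, hc0, hcs, rfl⟩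
        refine ⟨fun i => c i, fun i => hc0 i, ?_⟩
        show ∑ i : ↥s, c i • v i = ∑ i, c i • v i
        rw [Finset.univ_eq_attach, Finset.sum_attach s (fun i => c i • v i)]
        refine Finset.sum_subset (Finset.subset_univ s) ?_
        intro i _ hi
        rw [hcs i hi, zero_smul]
      · rintro ⟨c, hc, rfl⟩
        refine ⟨fun i => if h : i ∈ s then c ⟨i, h⟩ else 0, ?_, ?_, ?_⟩
        · intro i
          by_cases h : i ∈ s
          · simpa [h] using hc ⟨i, h⟩
          · simp [h]
        · intro i hi; simp [hi]
        · show (∑ i : ↥s, c i • v i)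
            = ∑ i : Fin n, (if h : i ∈ s then c ⟨i, h⟩ else 0) • v i
          calc ∑ i : ↥s, c i • v (i : Fin n)
              = ∑ i ∈ s.attach,
                  (if h : (i : Fin n) ∈ s then c ⟨i, h⟩ else 0) • v (i : Fin n) := by
                rw [Finset.univ_eq_attach]
                exact Finset.sum_congr rfl fun i _ => by simp [i.2]
            _ = ∑ i ∈ s, (if h : i ∈ s then c ⟨i, h⟩ else 0) • v i :=
                Finset.sum_attach s
                  (fun i => (if h : i ∈ s then c ⟨i, h⟩ else 0) • v i)
            _ = ∑ i : Fin n, (if h : i ∈ s then c ⟨i, h⟩ else 0) • v i :=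
                Finset.sum_subset (Finset.subset_univ s)
                  (fun i _ hi => by simp [hi])
    rw [himg]
    exact hemb.isClosedMap _ hC
  · -- dependent generators: reduce to smaller supports
    obtain ⟨g, hg0, hgex⟩ : ∃ g : ↥s → ℝ,
        (∑ i, g i • v (i : Fin n)) = 0 ∧ ∃ i, 0 < g i := by
      obtain ⟨g, hg0, i₁, hi₁⟩ := Fintype.not_linearIndependent_iff.mp hli
      rcases Ne.lt_or_gt hi₁ with h | h
      · refine ⟨-g, ?_, i₁, by simpa using h⟩
        have hneg : ∑ i : ↥s, (-g) i • v (i : Fin n)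
            = -∑ i : ↥s, g i • v (i : Fin n) := by
          simp only [Pi.neg_apply, neg_smul]
          exact Finset.sum_neg_distrib _
        rw [hneg, hg0, neg_zero]
      · exact ⟨g, hg0, i₁, h⟩
    set lam : Fin n → ℝ := fun i => if h : i ∈ s then g ⟨i, h⟩ else 0 with hlamdef
    have hlam0 : (∑ i, lam i • v i) = 0 := by
      calc (∑ i, lam i • v i) = ∑ i ∈ s, lam i • v i :=
            (Finset.sum_subset (Finset.subset_univ s)
              (fun i _ hi => by simp [hlamdef, hi])).symm
        _ = ∑ i ∈ s.attach, lam (i : Fin n) • v (i : Fin n) :=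
            (Finset.sum_attach s (fun i => lam i • v i)).symm
        _ = ∑ i : ↥s, g i • v (i : Fin n) := by
            rw [← Finset.univ_eq_attach]
            exact Finset.sum_congr rfl fun i _ => by simp [hlamdef, i.2]
        _ = 0 := hg0
    set P : Finset (Fin n) := s.filter (fun i => 0 < lam i) with hPdef
    have hPne : P.Nonempty := by
      obtain ⟨i₁, h⟩ := hgex
      exact ⟨i₁, Finset.mem_filter.mpr ⟨i₁.2, by simpa [hlamdef, i₁.2] using h⟩⟩
    have hsplit : coneS v s = ⋃ i ∈ P, coneS v (s.erase i) := by
      ext x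
      constructor
      · rintro ⟨c, hc0, hcs, rfl⟩
        obtain ⟨i₀, hi₀P, hmin⟩ := P.exists_min_image (fun i => c i / lam i) hPne
        have hlam₀ : 0 < lam i₀ := (Finset.mem_filter.mp hi₀P).2
        set t := c i₀ / lam i₀ with htdef
        have ht : 0 ≤ t := div_nonneg (hc0 _) hlam₀.le
        refine Set.mem_biUnion hi₀P ⟨fun i => c i - t * lam i, ?_, ?_, ?_⟩
        · intro i
          show 0 ≤ c i - t * lam i
          by_cases hiP : i ∈ P
          · have hl : 0 < lam i := (Finset.mem_filter.mp hiP).2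
            have h2 := hmin i hiP
            rw [le_div_iff₀ hl] at h2
            linarith
          · have hl : lam i ≤ 0 := by
              by_cases his : i ∈ s
              · by_contra h
                push_neg at h
                exact hiP (Finset.mem_filter.mpr ⟨his, h⟩)
              · simp [hlamdef, his]
            nlinarith [hc0 i, mul_nonneg ht (neg_nonneg.mpr hl)]
        · intro i hi
          show c i - t * lam i = 0
          by_cases h : i = i₀
          · subst h
            rw [htdef, div_mul_cancel₀ _ hlam₀.ne', sub_self]
          · have his : i ∉ s := by
              rw [Finset.mem_erase] at hi
              tauto
            rw [hcs i his]
            simp [hlamdef, his]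
        · have : ∀ i, (c i - t * lam i) • v i = c i • v i - t • (lam i • v i) := by
            intro i; rw [sub_smul, mul_smul]
          simp only [this, Finset.sum_sub_distrib, ← Finset.smul_sum, hlam0,
            smul_zero, sub_zero]
      · intro hx
        obtain ⟨i, hiP, c, hc0, hcs, rfl⟩ := by
          simpa using hx
        exact ⟨c, hc0, fun j hj => hcs j (fun hmem => hj (Finset.mem_of_mem_erase hmem)), rfl⟩
    rw [hsplit]
    exact isClosed_biUnion_finset fun i hi =>
      IH (s.erase i) (Finset.erase_ssubset (Finset.mem_filter.mp hi).1)

lemma polyCone_isClosed [FiniteDimensional ℝ W] {K : Set W} (h : IsPolyCone K) :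
    IsClosed K := by
  classical
  obtain ⟨n, v, rfl⟩ := h
  have : {x | ∃ c : Fin n → ℝ, (∀ i, 0 ≤ c i) ∧ x = ∑ i, c i • v i}
      = coneS v Finset.univ := by
    ext x; simp [coneS]
  rw [this]
  exact coneS_closed v Finset.univ

end Closed

/-- Key geometric lemma: if `K, K'` are polyhedral cones whose union is convex,
then the segment between a point of `K` and a point of `K'` meets `K ∩ K'`. -/
lemma polyCone_key {V : Type*} [AddCommGroup V] [Module ℝ V] [FiniteDimensional ℝ V]
    {K K' : Set V} (hK : IsPolyCone K) (hK' : IsPolyCone K')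
    (hconv : Convex ℝ (K ∪ K')) {a b : V} (ha : a ∈ K) (hb : b ∈ K') :
    ∃ t : ℝ, 0 ≤ t ∧ t ≤ 1 ∧ (1 - t) • a + t • b ∈ K ∩ K' := by
  classical
  set d := Module.finrank ℝ V with hd
  let e : V ≃ₗ[ℝ] (Fin d → ℝ) := (Module.finBasis ℝ V).equivFun
  set f := e.toLinearMap with hf
  have hKc : IsClosed (f '' K) := polyCone_isClosed (polyCone_image f hK)
  have hK'c : IsClosed (f '' K') := polyCone_isClosed (polyCone_image f hK')
  set g : ℝ → (Fin d → ℝ) := fun t => (1 - t) • e a + t • e b with hg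
  have hgc : Continuous g := by
    apply Continuous.add
    · exact (Continuous.sub continuous_const continuous_id).smul continuous_const
    · exact continuous_id.smul continuous_const
  have hgeq : ∀ t : ℝ, g t = e ((1 - t) • a + t • b) := by
    intro t; simp [hg, map_add, map_smul]
  have hcover : Icc (0:ℝ) 1 ⊆ g ⁻¹' (f '' K) ∪ g ⁻¹' (f '' K') := by
    intro t ht
    have h1 : (1 - t) • a + t • b ∈ K ∪ K' :=
      hconv (Or.inl ha) (Or.inr hb) (by linarith [ht.2]) ht.1 (by ring)
    rcases h1 with h | h
    · exact Or.inl (by rw [Set.mem_preimage, hgeq]; exact ⟨_, h, rfl⟩)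
    · exact Or.inr (by rw [Set.mem_preimage, hgeq]; exact ⟨_, h, rfl⟩)
  have h0 : ((Icc (0:ℝ) 1) ∩ g ⁻¹' (f '' K)).Nonempty := by
    refine ⟨0, ⟨le_refl 0, zero_le_one⟩, ?_⟩
    rw [Set.mem_preimage, hgeq]
    exact ⟨_, by simpa using ha, rfl⟩
  have h1 : ((Icc (0:ℝ) 1) ∩ g ⁻¹' (f '' K')).Nonempty := by
    refine ⟨1, ⟨zero_le_one, le_refl 1⟩, ?_⟩
    rw [Set.mem_preimage, hgeq]
    exact ⟨_, by simpa using hb, rfl⟩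
  obtain ⟨t, htI, htK, htK'⟩ := isPreconnected_closed_iff.mp isPreconnected_Icc
    (g ⁻¹' (f '' K)) (g ⁻¹' (f '' K')) (hKc.preimage hgc) (hK'c.preimage hgc)
    hcover h0 h1
  have pull : ∀ {M : Set V}, g t ∈ f '' M → (1 - t) • a + t • b ∈ M := by
    rintro M ⟨x, hx, hex⟩
    have : x = (1 - t) • a + t • b := by
      apply e.injective
      rw [← hgeq]
      exact hex
    rwa [this] at hx
  exact ⟨t, htI.1, htI.2, pull htK, pull htK'⟩

/-- if the complement of `X` is convex, then the indicator-type
function `φ_X` (equal to `1` on nonempty polyhedral cones contained in `X` and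
`0` otherwise) is a valuation on closed convex polyhedral cones. -/
theorem stmt_0 {V : Type*} [AddCommGroup V] [Module ℝ V] [FiniteDimensional ℝ V]
    (X : Set V) (hX : Convex ℝ Xᶜ)
    (φ : Set V → ℤ)
    (hφ1 : ∀ K : Set V, K.Nonempty → K ⊆ X → φ K = 1)
    (hφ0 : ∀ K : Set V, ¬(K.Nonempty ∧ K ⊆ X) → φ K = 0)
    (K K' : Set V) (hK : IsPolyCone K) (hK' : IsPolyCone K')
    (hU : IsPolyCone (K ∪ K')) :
    φ (K ∪ K') + φ (K ∩ K') = φ K + φ K' := by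
  have z0K : (0 : V) ∈ K := polyCone_zero_mem hK
  have z0K' : (0 : V) ∈ K' := polyCone_zero_mem hK'
  by_cases h1 : K ⊆ X <;> by_cases h2 : K' ⊆ X
  · rw [hφ1 K ⟨0, z0K⟩ h1, hφ1 K' ⟨0, z0K'⟩ h2,
      hφ1 (K ∪ K') ⟨0, Or.inl z0K⟩ (Set.union_subset h1 h2),
      hφ1 (K ∩ K') ⟨0, z0K, z0K'⟩ ((Set.inter_subset_left).trans h1)]
  · rw [hφ1 K ⟨0, z0K⟩ h1, hφ0 K' (fun h => h2 h.2),
      hφ0 (K ∪ K') (fun h => h2 ((Set.subset_union_right).trans h.2)),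
      hφ1 (K ∩ K') ⟨0, z0K, z0K'⟩ ((Set.inter_subset_left).trans h1)]
    ring
  · rw [hφ0 K (fun h => h1 h.2), hφ1 K' ⟨0, z0K'⟩ h2,
      hφ0 (K ∪ K') (fun h => h1 ((Set.subset_union_left).trans h.2)),
      hφ1 (K ∩ K') ⟨0, z0K, z0K'⟩ ((Set.inter_subset_right).trans h2)]
  · obtain ⟨a, haK, haX⟩ := Set.not_subset.mp h1
    obtain ⟨b, hbK', hbX⟩ := Set.not_subset.mp h2
    obtain ⟨t, ht0, ht1, hzK, hzK'⟩ :=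
      polyCone_key hK hK' (polyCone_convex hU) haK hbK'
    have hzX : (1 - t) • a + t • b ∈ Xᶜ :=
      hX haX hbX (by linarith) ht0 (by ring)
    rw [hφ0 K (fun h => haX (h.2 haK)), hφ0 K' (fun h => hbX (h.2 hbK')),
      hφ0 (K ∪ K') (fun h => haX (h.2 (Or.inl haK))),
      hφ0 (K ∩ K') (fun h => hzX (h.2 ⟨hzK, hzK'⟩))]
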